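/- With G(x; v) = E₀ - x + τ²(ζ₁(x-v) + ζ₁(x)), E₀ ≥ 10, |τ| small: the function g₂(v) := G(-2+v; v) = E₀ + 2 - v + τ²(ζ₁(-2) + ζ₁(-2+v)) is strictly decreasing in v > 4, satisfies g₂(v) > G(2+v; v) ≥ 0 for 4 ≤ v ≤ v_{c,1}, and there is a unique v_{c,2} > v_{c,1} with g₂(v_{c,2}) = 0; for every v > v_{c,2} there exists a unique λ(v) ∈ (2, v-2) with G(λ(v); v) = 0, while for 4 < v ≤ v_{c,2} the function G(·; v) has no zero in (2, -2+v). -/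

import Mathlib

noncomputable def zeta1 (x : ℝ) : ℝ := x / 2 * (1 - Real.sqrt (1 - 4 / x ^ 2))

noncomputable def Gf (E₀ τ x v : ℝ) : ℝ := E₀ - x + τ ^ 2 * (zeta1 (x - v) + zeta1 x)

lemma zeta1_two : zeta1 2 = 1 := by
  unfold zeta1; norm_num

lemma zeta1_odd (x : ℝ) : zeta1 (-x) = - zeta1 x := by
  unfold zeta1
  rw [show (-x)^2 = x^2 by ring]
  ring

lemma zeta1_neg_two : zeta1 (-2) = -1 := by
  rw [show (-2:ℝ) = -(2:ℝ) by norm_num, zeta1_odd, zeta1_two]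

lemma zeta1_eq {x : ℝ} (hx : 2 ≤ x) :
    zeta1 x = 2 / (x * (1 + Real.sqrt (1 - 4 / x ^ 2))) := by
  have hx0 : (0:ℝ) < x := by linarith
  have harg : 0 ≤ 1 - 4 / x ^ 2 := by
    rw [sub_nonneg, div_le_one (by positivity)]
    nlinarith
  set s := Real.sqrt (1 - 4 / x ^ 2) with hs
  have hs2 : s ^ 2 = 1 - 4 / x ^ 2 := Real.sq_sqrt harg
  have hsnn : 0 ≤ s := Real.sqrt_nonneg _
  have hden : 0 < x * (1 + s) := by positivity
  rw [zeta1, ← hs, eq_div_iff (ne_of_gt hden)]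
  have h4 : s ^ 2 * x ^ 2 = x ^ 2 - 4 := by
    have hx2 : (x:ℝ) ^ 2 ≠ 0 := by positivity
    field_simp at hs2
    linarith [hs2]
  linear_combination (-1/2 : ℝ) * h4

lemma zeta1_anti_le {a b : ℝ} (ha : 2 ≤ a) (hab : a ≤ b) : zeta1 b ≤ zeta1 a := by
  have hb : 2 ≤ b := le_trans ha hab
  rw [zeta1_eq ha, zeta1_eq hb]
  have hsa : Real.sqrt (1 - 4 / a ^ 2) ≤ Real.sqrt (1 - 4 / b ^ 2) := by
    apply Real.sqrt_le_sqrt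
    have : 4 / b ^ 2 ≤ 4 / a ^ 2 := by
      apply div_le_div_of_nonneg_left (by norm_num) (by positivity)
      nlinarith
    linarith
  have h1 : 0 < a * (1 + Real.sqrt (1 - 4 / a ^ 2)) := by positivity
  have h2 : a * (1 + Real.sqrt (1 - 4 / a ^ 2)) ≤ b * (1 + Real.sqrt (1 - 4 / b ^ 2)) := by
    nlinarith [Real.sqrt_nonneg (1 - 4 / a ^ 2)]
  gcongr

lemma zeta1_anti_lt {a b : ℝ} (ha : 2 ≤ a) (hab : a < b) : zeta1 b < zeta1 a := by
  have hb : 2 ≤ b := le_of_lt (lt_of_le_of_lt ha hab)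
  rw [zeta1_eq ha, zeta1_eq hb]
  have hsa : Real.sqrt (1 - 4 / a ^ 2) ≤ Real.sqrt (1 - 4 / b ^ 2) := by
    apply Real.sqrt_le_sqrt
    have : 4 / b ^ 2 ≤ 4 / a ^ 2 := by
      apply div_le_div_of_nonneg_left (by norm_num) (by positivity)
      nlinarith
    linarith
  have h1 : 0 < a * (1 + Real.sqrt (1 - 4 / a ^ 2)) := by positivity
  have h2 : a * (1 + Real.sqrt (1 - 4 / a ^ 2)) < b * (1 + Real.sqrt (1 - 4 / b ^ 2)) := by
    nlinarith [Real.sqrt_nonneg (1 - 4 / a ^ 2)]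
  gcongr 2 / ?_

lemma zeta1_pos {x : ℝ} (hx : 2 ≤ x) : 0 < zeta1 x := by
  rw [zeta1_eq hx]
  have : 0 ≤ Real.sqrt (1 - 4 / x ^ 2) := Real.sqrt_nonneg _
  positivity

lemma zeta1_le_one {x : ℝ} (hx : 2 ≤ x) : zeta1 x ≤ 1 := by
  rw [← zeta1_two]; exact zeta1_anti_le le_rfl hx

lemma zeta1_neg_val (x : ℝ) : zeta1 x = - zeta1 (-x) := by
  rw [zeta1_odd]; ring

lemma zeta1_anti_le_neg {a b : ℝ} (hb : b ≤ -2) (hab : a ≤ b) : zeta1 b ≤ zeta1 a := by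
  have h2 : 2 ≤ -b := by linarith
  have h := zeta1_anti_le h2 (by linarith : -b ≤ -a)
  rw [zeta1_neg_val a, zeta1_neg_val b]
  linarith

lemma zeta1_neg_lb {x : ℝ} (hx : x ≤ -2) : -1 ≤ zeta1 x := by
  have h : 2 ≤ -x := by linarith
  have := zeta1_le_one h
  rw [zeta1_neg_val x]; linarith

lemma zeta1_contOn : ContinuousOn zeta1 {x : ℝ | x ≠ 0} := by
  unfold zeta1
  apply ContinuousOn.mul
  · exact (continuous_id.div_const 2).continuousOn
  · apply ContinuousOn.sub continuousOn_const
    apply Real.continuous_sqrt.comp_continuousOn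
    apply ContinuousOn.sub continuousOn_const
    exact ContinuousOn.div continuousOn_const
      (continuous_pow 2).continuousOn
      (fun x hx => pow_ne_zero 2 hx)

/-- `g₂(v) := G(-2+v;v)` is strictly decreasing on `(4,∞)`, satisfies
`g₂(v) > G(2+v;v) ≥ 0` for `4 ≤ v ≤ v_{c,1}`, and there is a unique `v_{c,2} > v_{c,1}`
with `g₂(v_{c,2}) = 0`; for `v > v_{c,2}` there is a unique zero `λ(v) ∈ (2, v-2)` of
`G(·;v)`, while for `4 < v ≤ v_{c,2}` there is no zero in `(2, -2+v)`. -/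
theorem stmt9 (E₀ : ℝ) (hE : 10 ≤ E₀) :
    ∃ τ₀ > (0 : ℝ), ∀ τ : ℝ, τ ≠ 0 → |τ| ≤ τ₀ →
      ∀ vc1 : ℝ, 4 < vc1 → Gf E₀ τ (2 + vc1) vc1 = 0 →
        (∀ v : ℝ, Gf E₀ τ (-2 + v) v
            = E₀ + 2 - v + τ ^ 2 * (zeta1 (-2) + zeta1 (-2 + v))) ∧
        StrictAntiOn (fun v => Gf E₀ τ (-2 + v) v) (Set.Ioi 4) ∧
        (∀ v ∈ Set.Icc (4 : ℝ) vc1,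
          Gf E₀ τ (2 + v) v < Gf E₀ τ (-2 + v) v ∧ 0 ≤ Gf E₀ τ (2 + v) v) ∧
        ∃ vc2 : ℝ, vc1 < vc2 ∧ Gf E₀ τ (-2 + vc2) vc2 = 0 ∧
          (∀ v : ℝ, 4 < v → Gf E₀ τ (-2 + v) v = 0 → v = vc2) ∧
          (∀ v : ℝ, vc2 < v →
            ∃! lam : ℝ, lam ∈ Set.Ioo 2 (v - 2) ∧ Gf E₀ τ lam v = 0) ∧
          (∀ v : ℝ, 4 < v → v ≤ vc2 → ∀ x ∈ Set.Ioo (2 : ℝ) (-2 + v), Gf E₀ τ x v ≠ 0) := by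
  refine ⟨1, one_pos, ?_⟩
  intro τ hτne hτle vc1 hvc1 h0
  have hτ2 : τ ^ 2 ≤ 1 := by nlinarith [sq_abs τ, abs_nonneg τ]
  have hτ0 : 0 ≤ τ ^ 2 := sq_nonneg τ
  have g2_eq : ∀ v : ℝ, Gf E₀ τ (-2 + v) v
      = E₀ + 2 - v + τ ^ 2 * (zeta1 (-2) + zeta1 (-2 + v)) := by
    intro v
    unfold Gf
    rw [show (-2 + v) - v = (-2:ℝ) by ring]
    ring
  have g2_eq' : ∀ v : ℝ, Gf E₀ τ (-2 + v) v
      = E₀ + 2 - v + τ ^ 2 * (-1 + zeta1 (-2 + v)) := by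
    intro v; rw [g2_eq v, zeta1_neg_two]
  have h_eq : ∀ v : ℝ, Gf E₀ τ (2 + v) v
      = E₀ - 2 - v + τ ^ 2 * (1 + zeta1 (2 + v)) := by
    intro v
    unfold Gf
    rw [show (2 + v) - v = (2:ℝ) by ring, zeta1_two]
    ring
  have g2_anti : StrictAntiOn (fun v => Gf E₀ τ (-2 + v) v) (Set.Ioi 4) := by
    intro v1 hv1 v2 hv2 h12
    simp only [Set.mem_Ioi] at hv1 hv2
    have hz : zeta1 (-2 + v2) ≤ zeta1 (-2 + v1) :=
      zeta1_anti_le (by linarith) (by linarith)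
    simp only [g2_eq']
    nlinarith [mul_le_mul_of_nonneg_left hz hτ0]
  have part3 : ∀ v ∈ Set.Icc (4:ℝ) vc1,
      Gf E₀ τ (2 + v) v < Gf E₀ τ (-2 + v) v ∧ 0 ≤ Gf E₀ τ (2 + v) v := by
    intro v hv
    obtain ⟨hv4, hvc⟩ := hv
    have hz1 : 0 < zeta1 (-2 + v) := zeta1_pos (by linarith)
    have hz2 : zeta1 (2 + v) ≤ 1 := zeta1_le_one (by linarith)
    have hz3 : 0 < zeta1 (2 + v) := zeta1_pos (by linarith)
    have hz4 : zeta1 (-2 + v) ≤ 1 := zeta1_le_one (by linarith)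
    constructor
    · rw [g2_eq' v, h_eq v]
      nlinarith [mul_nonneg hτ0 hz1.le, mul_le_mul_of_nonneg_left hz2 hτ0]
    · have h0' := h0
      rw [h_eq vc1] at h0'
      rw [h_eq v]
      have hz5 : zeta1 (2 + vc1) ≤ zeta1 (2 + v) :=
        zeta1_anti_le (by linarith) (by linarith)
      nlinarith [mul_le_mul_of_nonneg_left hz5 hτ0]
  refine ⟨g2_eq, g2_anti, part3, ?_⟩
  -- existence of vc2
  have g2vc1_pos : 0 < Gf E₀ τ (-2 + vc1) vc1 := by
    have h := (part3 vc1 ⟨le_of_lt hvc1, le_rfl⟩).1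
    rw [h0] at h
    exact h
  set V : ℝ := max (vc1 + 1) (E₀ + 3) with hVdef
  have hV1 : vc1 < V := lt_of_lt_of_le (lt_add_one vc1) (le_max_left _ _)
  have hV2 : E₀ + 3 ≤ V := le_max_right _ _
  have g2V_neg : Gf E₀ τ (-2 + V) V < 0 := by
    rw [g2_eq']
    have hz : zeta1 (-2 + V) ≤ 1 := zeta1_le_one (by linarith)
    nlinarith [mul_nonpos_of_nonneg_of_nonpos hτ0
      (by linarith : -1 + zeta1 (-2 + V) ≤ 0)]
  have g2_cont : ContinuousOn (fun v => Gf E₀ τ (-2 + v) v) (Set.Icc vc1 V) := by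
    apply ContinuousOn.congr (f := fun v => E₀ + 2 - v + τ ^ 2 * (-1 + zeta1 (-2 + v)))
      ?_ (fun v _ => g2_eq' v)
    apply ContinuousOn.add
    · exact (Continuous.sub (by continuity) continuous_id).continuousOn
    apply ContinuousOn.mul continuousOn_const
    apply ContinuousOn.add continuousOn_const
    apply zeta1_contOn.comp ((continuous_const.add continuous_id).continuousOn)
    intro x hx
    simp only [Set.mem_setOf_eq, id_eq]
    have h1 := hx.1
    intro hc
    simp only [Pi.add_apply, id_eq] at hc
    linarith
  have hIvt := intermediate_value_Ioo' (le_of_lt hV1) g2_cont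
  obtain ⟨vc2, hvc2mem, hvc2⟩ := hIvt ⟨g2V_neg, g2vc1_pos⟩
  have hvc2' : Gf E₀ τ (-2 + vc2) vc2 = 0 := hvc2
  have hvc24 : 4 < vc2 := lt_trans hvc1 hvc2mem.1
  -- G strictly anti / continuous in x
  have GantiAll : ∀ w : ℝ, 4 < w → StrictAntiOn (fun x => Gf E₀ τ x w) (Set.Icc 2 (w-2)) := by
    intro w hw a ha b hb hab
    have hza : zeta1 b ≤ zeta1 a := zeta1_anti_le ha.1 (le_of_lt hab)
    have hzb : zeta1 (b - w) ≤ zeta1 (a - w) :=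
      zeta1_anti_le_neg (by linarith [hb.2]) (by linarith)
    simp only [Gf]
    nlinarith [mul_le_mul_of_nonneg_left (add_le_add hzb hza) hτ0]
  have GcontAll : ∀ w : ℝ, 4 < w →
      ContinuousOn (fun x => Gf E₀ τ x w) (Set.Icc 2 (w-2)) := by
    intro w hw
    unfold Gf
    apply ContinuousOn.add
    · exact (continuous_const.sub continuous_id).continuousOn
    apply ContinuousOn.mul continuousOn_const
    apply ContinuousOn.add
    · apply zeta1_contOn.comp ((continuous_id.sub continuous_const).continuousOn)
      intro x hx
      simp only [Set.mem_setOf_eq, id_eq]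
      have h1 := hx.2
      intro hc
      have h2 : x = w := by simp only [Pi.sub_apply, id_eq] at hc; linarith
      linarith
    · exact zeta1_contOn.mono (fun x hx => by
        simp only [Set.mem_setOf_eq]
        have := hx.1; intro hc; rw [hc] at this; linarith)
  refine ⟨vc2, hvc2mem.1, hvc2', ?_, ?_, ?_⟩
  · intro v hv4 hveq
    exact g2_anti.injOn (Set.mem_Ioi.mpr hv4) (Set.mem_Ioi.mpr hvc24)
      (by simpa using hveq.trans hvc2'.symm)
  · intro v hv
    have hv4 : 4 < v := lt_trans hvc24 hv
    have h2v : (2:ℝ) < v - 2 := by linarith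
    have Gpos : 0 < Gf E₀ τ 2 v := by
      unfold Gf
      rw [zeta1_two]
      have hlb : -1 ≤ zeta1 (2 - v) := zeta1_neg_lb (by linarith)
      nlinarith [mul_nonneg hτ0 (by linarith : (0:ℝ) ≤ zeta1 (2 - v) + 1)]
    have Gneg : Gf E₀ τ (v - 2) v < 0 := by
      have h1 : Gf E₀ τ (-2 + v) v < Gf E₀ τ (-2 + vc2) vc2 :=
        g2_anti (Set.mem_Ioi.mpr hvc24) (Set.mem_Ioi.mpr hv4) hv
      rw [hvc2'] at h1
      rw [show v - 2 = -2 + v by ring]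
      exact h1
    have hIvt2 := intermediate_value_Ioo' (le_of_lt h2v) (GcontAll v hv4)
    obtain ⟨lam, hlammem, hlameq⟩ := hIvt2 ⟨Gneg, Gpos⟩
    refine ⟨lam, ⟨hlammem, hlameq⟩, ?_⟩
    rintro y ⟨hymem, hyeq⟩
    exact (GantiAll v hv4).injOn (Set.Ioo_subset_Icc_self hymem)
      (Set.Ioo_subset_Icc_self hlammem) (by rw [hyeq]; exact hlameq.symm ▸ rfl)
  · intro v hv4 hvle x hx
    have hxIcc : x ∈ Set.Icc 2 (v - 2) := ⟨le_of_lt hx.1, by linarith [hx.2]⟩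
    have hend : (v - 2) ∈ Set.Icc (2:ℝ) (v - 2) := ⟨by linarith, le_rfl⟩
    have h1 : Gf E₀ τ (v - 2) v < Gf E₀ τ x v :=
      (GantiAll v hv4) hxIcc hend (by linarith [hx.2])
    have h2 : 0 ≤ Gf E₀ τ (v - 2) v := by
      rw [show v - 2 = -2 + v by ring]
      rcases eq_or_lt_of_le hvle with h | h
      · rw [h, hvc2']
      · have h3 : Gf E₀ τ (-2 + vc2) vc2 < Gf E₀ τ (-2 + v) v :=
          g2_anti (Set.mem_Ioi.mpr hv4) (Set.mem_Ioi.mpr hvc24) h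
        rw [hvc2'] at h3
        exact le_of_lt h3
    intro hc
    rw [hc] at h1
    linarith
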